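/- Short-time theorem for the exciton-polariton system, regime A: with initial data φ(0) = φ̃(0) = ε^αφ₀ (‖φ₀‖_{H^s} = M) and ψ(0) = ψ̃(0) = 0, the relative error between the true photon field φ and the fully decoupled approximation φ̃ (solving iφ̃_t = −Δφ̃) satisfies ‖φ̃(t) − φ(t)‖_{H^s}/‖φ(t)‖_{H^s} ≤ ½γ²C₁²ε + O(ε^q) for 0 ≤ t ≤ C₁ε^{1/2}, where q = min{2, 1 + p/2 + α(p−1)} > 3/2. -/

import Mathlib

set_option maxHeartbeats 1000000


open Set MeasureTheory

lemma bootstrap {f : ℝ → ℝ} {T B : ℝ} (hT : 0 ≤ T) (hB : 0 < B)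
    (hc : ContinuousOn f (Icc 0 T)) (h0 : f 0 < B)
    (hind : ∀ t ∈ Icc 0 T, (∀ τ ∈ Icc 0 t, f τ ≤ B) → f t ≤ 3 / 4 * B) :
    ∀ t ∈ Icc 0 T, f t ≤ B := by
  set S : Set ℝ := {t ∈ Icc 0 T | ∀ τ ∈ Icc 0 t, f τ ≤ B} with hS
  have h0S : (0:ℝ) ∈ S := by
    refine ⟨⟨le_refl 0, hT⟩, ?_⟩
    intro τ hτ
    have : τ = 0 := le_antisymm hτ.2 hτ.1
    simp [this, h0.le]
  have hne : S.Nonempty := ⟨0, h0S⟩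
  have hbdd : BddAbove S := ⟨T, fun x hx => hx.1.2⟩
  set c := sSup S with hc'
  have hcmem : c ∈ Icc (0:ℝ) T :=
    ⟨le_csSup hbdd h0S, csSup_le hne fun x hx => hx.1.2⟩
  have hfcB : f c ≤ B := by
    by_contra hgt
    push_neg at hgt
    have hcw : ContinuousWithinAt f (Icc 0 T) c := hc c hcmem
    have hmem : {x | B < f x} ∈ nhdsWithin c (Icc 0 T) :=
      hcw (Ioi_mem_nhds hgt)
    rcases Metric.mem_nhdsWithin_iff.mp hmem with ⟨δ, hδ, hball⟩
    have hcpos : 0 < c := by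
      rcases eq_or_lt_of_le hcmem.1 with h' | h'
      · exact absurd h0 (by rw [← h'] at hgt; exact not_lt.mpr hgt.le)
      · exact h'
    have hmin : 0 < min δ c := lt_min hδ hcpos
    have hlt : c - min δ c / 2 < c := by linarith
    rcases exists_lt_of_lt_csSup hne hlt with ⟨a, haS, ha⟩
    have hac : a ≤ c := le_csSup hbdd haS
    have hfa : f a ≤ B := haS.2 a ⟨haS.1.1, le_refl a⟩
    have : a ∈ Metric.ball c δ ∩ Icc 0 T := by
      refine ⟨?_, haS.1⟩
      have h1 : min δ c ≤ δ := min_le_left _ _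
      simp only [Metric.mem_ball, Real.dist_eq, abs_lt]
      constructor <;> linarith
    exact absurd (hball this) (not_lt.mpr hfa)
  have hcS : c ∈ S := by
    refine ⟨hcmem, fun τ hτ => ?_⟩
    rcases eq_or_lt_of_le hτ.2 with h | h
    · rw [h]; exact hfcB
    · rcases exists_lt_of_lt_csSup hne h with ⟨a, haS, ha⟩
      exact haS.2 τ ⟨hτ.1, ha.le⟩
  rcases eq_or_lt_of_le hcmem.2 with hcT | hcT
  · intro t ht
    exact hcS.2 t (by rw [hcT]; exact ht)
  · exfalso
    have hfc : f c < B := lt_of_le_of_lt (hind c hcmem hcS.2) (by linarith)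
    have hcw : ContinuousWithinAt f (Icc 0 T) c := hc c hcmem
    have hmem : {x | f x < B} ∈ nhdsWithin c (Icc 0 T) := hcw (Iio_mem_nhds hfc)
    rcases Metric.mem_nhdsWithin_iff.mp hmem with ⟨δ, hδ, hball⟩
    set t' := min T (c + δ / 2) with ht'
    have ht'c : c < t' := lt_min hcT (by linarith)
    have ht'S : t' ∈ S := by
      refine ⟨⟨le_trans hcmem.1 ht'c.le, min_le_left _ _⟩, fun τ hτ => ?_⟩
      rcases le_or_gt τ c with h | h
      · exact hcS.2 τ ⟨hτ.1, h⟩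
      · have hτT : τ ≤ T := le_trans hτ.2 (min_le_left _ _)
        have hτδ : τ < c + δ := lt_of_le_of_lt hτ.2
          (lt_of_le_of_lt (min_le_right T (c + δ / 2)) (by linarith))
        have : τ ∈ Metric.ball c δ ∩ Icc 0 T := by
          refine ⟨?_, ⟨hτ.1, hτT⟩⟩
          simp only [Metric.mem_ball, Real.dist_eq, abs_lt]
          constructor <;> linarith
        exact (hball this).le
    exact absurd (le_csSup hbdd ht'S) (not_le.mpr ht'c)

theorem stmt15 {E : Type*} [NormedAddCommGroup E] [NormedSpace ℂ E] [CompleteSpace E]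
    (p γ g ω₀ Kp α M C₁ T : ℝ) (hp : 1 < p) (hγ : 0 < γ) (hKp : 0 ≤ Kp)
    (hα : 0 ≤ α) (hM : 0 < M) (hC₁ : 0 ≤ C₁) (hT : 0 < T)
    (U : ℝ → E →ₗᵢ[ℂ] E) (N : E → E) (hN : ∀ u : E, ‖N u‖ ≤ Kp * ‖u‖ ^ p)
    (φ₀ : E) (hφ₀ : ‖φ₀‖ = M)
    (φ ψ : ℝ → ℝ → E)
    (hφc : ∀ ε ∈ Ioo (0:ℝ) 1, ContinuousOn (φ ε) (Icc 0 T))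
    (hψc : ∀ ε ∈ Ioo (0:ℝ) 1, ContinuousOn (ψ ε) (Icc 0 T))
    (hIntU : ∀ ε ∈ Ioo (0:ℝ) 1, ∀ t ∈ Icc (0:ℝ) T,
      IntervalIntegrable (fun τ => U (t - τ) (ψ ε τ)) volume 0 t)
    (hDuhφ : ∀ ε ∈ Ioo (0:ℝ) 1, ∀ t ∈ Icc (0:ℝ) T,
      φ ε t = ((ε ^ α : ℝ) : ℂ) • U t φ₀
        - (Complex.I * (γ : ℂ)) • ∫ τ in (0:ℝ)..t, U (t - τ) (ψ ε τ))
    (hDuhψ : ∀ ε ∈ Ioo (0:ℝ) 1, ∀ t ∈ Icc (0:ℝ) T,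
      ψ ε t = -(Complex.I * (γ : ℂ)) • ∫ τ in (0:ℝ)..t,
              Complex.exp (-(Complex.I) * (ω₀ : ℂ) * ((t - τ : ℝ) : ℂ)) • φ ε τ
            - (Complex.I * (g : ℂ)) • ∫ τ in (0:ℝ)..t,
              Complex.exp (-(Complex.I) * (ω₀ : ℂ) * ((t - τ : ℝ) : ℂ)) • N (ψ ε τ)) :
    3 / 2 < min 2 (1 + p / 2 + α * (p - 1)) ∧
    ∃ D ≥ (0:ℝ), ∃ ε₀ > (0:ℝ), ∀ ε : ℝ, 0 < ε → ε < ε₀ → ε < 1 →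
      C₁ * ε ^ ((1:ℝ)/2) < T →
      ∀ t ∈ Icc (0:ℝ) (C₁ * ε ^ ((1:ℝ)/2)),
        ‖((ε ^ α : ℝ) : ℂ) • U t φ₀ - φ ε t‖
          ≤ (γ ^ 2 * C₁ ^ 2 / 2 * ε + D * ε ^ min 2 (1 + p / 2 + α * (p - 1))) * ‖φ ε t‖ := by
  have hqgt : 3 / 2 < min 2 (1 + p / 2 + α * (p - 1)) := by
    apply lt_min (by norm_num)
    linarith only [hp, mul_nonneg hα (sub_nonneg.mpr hp.le)]
  refine ⟨hqgt, ?_⟩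
  set q := min 2 (1 + p / 2 + α * (p - 1)) with hqdef
  have hq2 : q ≤ 2 := min_le_left _ _
  have hqL : q ≤ 1 + p / 2 + α * (p - 1) := min_le_right _ _
  set c₂ : ℝ := γ ^ 2 * |g| * Kp * (2 * γ * C₁) ^ p * C₁ ^ 3 * M ^ (p - 1) / 2 with hc₂def
  have hc₂0 : 0 ≤ c₂ := by
    rw [hc₂def]
    have h1 : (0:ℝ) ≤ (2 * γ * C₁) ^ p :=
      Real.rpow_nonneg (mul_nonneg (mul_nonneg (by norm_num) hγ.le) hC₁) _
    have h2 : (0:ℝ) ≤ M ^ (p - 1) := Real.rpow_nonneg hM.le _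
    exact div_nonneg (mul_nonneg (mul_nonneg (mul_nonneg (mul_nonneg
      (mul_nonneg (sq_nonneg γ) (abs_nonneg g)) hKp) h1)
      (pow_nonneg hC₁ 3)) h2) (by norm_num)
  set D : ℝ := 4 * γ ^ 4 * C₁ ^ 4 + 2 * c₂ with hDdef
  have hD0 : 0 ≤ D := by
    rw [hDdef]
    exact add_nonneg (by positivity) (by linarith only [hc₂0])
  set K₂ : ℝ := γ * |g| * Kp * C₁ ^ 2 * (2 * γ * C₁ * M) ^ (p - 1) with hK₂def
  have hK₂0 : 0 ≤ K₂ := by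
    rw [hK₂def]
    have h1 : (0:ℝ) ≤ (2 * γ * C₁ * M) ^ (p - 1) :=
      Real.rpow_nonneg (mul_nonneg (mul_nonneg (mul_nonneg (by norm_num) hγ.le) hC₁) hM.le) _
    exact mul_nonneg (mul_nonneg (mul_nonneg (mul_nonneg hγ.le (abs_nonneg g)) hKp)
      (sq_nonneg C₁)) h1
  set ε₀ : ℝ := min (1 / (8 * (γ ^ 2 * C₁ ^ 2 + 1))) ((1 / (8 * (K₂ + 1))) ^ ((2:ℝ) / (p + 1))) with hε₀def
  have hε₀pos : 0 < ε₀ := by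
    rw [hε₀def]
    apply lt_min (by positivity)
    exact Real.rpow_pos_of_pos (div_pos one_pos (by linarith only [hK₂0])) _
  clear_value q c₂ D K₂ ε₀
  refine ⟨D, hD0, ε₀, hε₀pos, ?_⟩
  intro ε hε hεε₀ hε1 hTεT t ht
  rw [hε₀def] at hεε₀
  -- basic smallness facts
  have h18a : γ ^ 2 * C₁ ^ 2 * ε ≤ 1 / 8 := by
    have h1 : ε < 1 / (8 * (γ ^ 2 * C₁ ^ 2 + 1)) := lt_of_lt_of_le hεε₀ (min_le_left _ _)
    have h2 : (0:ℝ) < 8 * (γ ^ 2 * C₁ ^ 2 + 1) := by positivity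
    rw [lt_div_iff₀ h2] at h1
    linarith only [h1, hε.le]
  have h18b : K₂ * ε ^ ((p + 1) / 2) ≤ 1 / 8 := by
    have h1 : ε < (1 / (8 * (K₂ + 1))) ^ ((2:ℝ) / (p + 1)) :=
      lt_of_lt_of_le hεε₀ (min_le_right _ _)
    have hbpos : (0:ℝ) < 1 / (8 * (K₂ + 1)) := div_pos one_pos (by linarith only [hK₂0])
    have h3 : ((1 / (8 * (K₂ + 1))) ^ ((2:ℝ) / (p + 1))) ^ ((p + 1) / 2)
        = 1 / (8 * (K₂ + 1)) := by
      rw [← Real.rpow_mul hbpos.le]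
      have hp0 : p + 1 ≠ 0 := ne_of_gt (by linarith only [hp])
      have : (2:ℝ) / (p + 1) * ((p + 1) / 2) = 1 := by field_simp
      rw [this, Real.rpow_one]
    have h2 : ε ^ ((p + 1) / 2) < 1 / (8 * (K₂ + 1)) := by
      calc ε ^ ((p + 1) / 2) < ((1 / (8 * (K₂ + 1))) ^ ((2:ℝ) / (p + 1))) ^ ((p + 1) / 2) :=
            Real.rpow_lt_rpow hε.le h1 (by linarith only [hp])
        _ = _ := h3
    have h4 : ε ^ ((p + 1) / 2) * (8 * (K₂ + 1)) < 1 := by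
      rw [lt_div_iff₀ (show (0:ℝ) < 8 * (K₂ + 1) by linarith only [hK₂0])] at h2
      exact h2
    have hεp0 : 0 ≤ ε ^ ((p + 1) / 2) := Real.rpow_nonneg hε.le _
    linarith only [h4, hεp0]
  rcases eq_or_lt_of_le hC₁ with hC₁0 | hC₁pos
  · -- degenerate case C₁ = 0 : then t = 0 and the error vanishes
    have ht0 : t = 0 := le_antisymm (by rw [← hC₁0] at ht; simpa using ht.2) ht.1
    subst ht0
    have h := hDuhφ ε ⟨hε, hε1⟩ 0 ⟨le_refl 0, hT.le⟩
    rw [h, intervalIntegral.integral_same, smul_zero, sub_zero, sub_self, norm_zero]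
    exact mul_nonneg (add_nonneg (mul_nonneg (by positivity) hε.le)
      (mul_nonneg hD0 (Real.rpow_nonneg hε.le _))) (norm_nonneg _)
  -- main case C₁ > 0
  have hεmem : ε ∈ Ioo (0:ℝ) 1 := ⟨hε, hε1⟩
  set r := ε ^ ((1:ℝ)/2) with hrdef
  have hr0 : 0 < r := Real.rpow_pos_of_pos hε _
  have hr1 : r < 1 := Real.rpow_lt_one hε.le hε1 (by norm_num)
  have hrr : r * r = ε := by
    rw [hrdef, ← Real.rpow_add hε]; norm_num
  set Tε := C₁ * r with hTεdef
  have hTεpos : 0 < Tε := mul_pos hC₁pos hr0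
  set A := ε ^ α * M with hAdef
  have hA0 : 0 < A := mul_pos (Real.rpow_pos_of_pos hε α) hM
  have hAM : A ≤ M := by
    have h1 : ε ^ α ≤ 1 := Real.rpow_le_one hε.le hε1.le hα
    rw [hAdef]
    have h2 := mul_le_mul_of_nonneg_right h1 hM.le
    linarith only [h2]
  set B := 2 * γ * Tε * A with hBdef
  have hB0 : 0 < B := by
    rw [hBdef]
    exact mul_pos (mul_pos (mul_pos (by norm_num) hγ) hTεpos) hA0
  set cc := γ * (A + γ * Tε * B + |g| * (Kp * B ^ p * Tε)) with hccdef
  clear_value r Tε A B cc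
  have hBp0 : (0:ℝ) ≤ B ^ p := Real.rpow_nonneg hB0.le p
  have hgKB0 : (0:ℝ) ≤ |g| * (Kp * B ^ p * Tε) :=
    mul_nonneg (abs_nonneg g) (mul_nonneg (mul_nonneg hKp hBp0) hTεpos.le)
  have hcc0 : 0 ≤ cc := by
    rw [hccdef]
    have h1 : (0:ℝ) ≤ γ * Tε * B := mul_nonneg (mul_nonneg hγ.le hTεpos.le) hB0.le
    exact mul_nonneg hγ.le (add_nonneg (add_nonneg hA0.le h1) hgKB0)
  have hsub : Icc (0:ℝ) Tε ⊆ Icc (0:ℝ) T := fun x hx => ⟨hx.1, le_trans hx.2 hTεT.le⟩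
  -- norm helpers
  have hUnorm : ∀ (s : ℝ) (v : E), ‖U s v‖ = ‖v‖ := fun s v => (U s).norm_map v
  have hAnorm : ∀ s : ℝ, ‖((ε ^ α : ℝ) : ℂ) • U s φ₀‖ = A := by
    intro s
    rw [norm_smul, hUnorm, hφ₀, Complex.norm_real, Real.norm_eq_abs,
      abs_of_nonneg (Real.rpow_nonneg hε.le α), hAdef]
  have hIγ : ∀ v : E, ‖(Complex.I * (γ:ℂ)) • v‖ = γ * ‖v‖ := by
    intro v
    rw [norm_smul, norm_mul, Complex.norm_I, one_mul, Complex.norm_real, Real.norm_eq_abs,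
      abs_of_nonneg hγ.le]
  have hIγ' : ∀ v : E, ‖(-(Complex.I * (γ:ℂ))) • v‖ = γ * ‖v‖ := by
    intro v; rw [neg_smul, norm_neg]; exact hIγ v
  have hIg : ∀ v : E, ‖(Complex.I * (g:ℂ)) • v‖ = |g| * ‖v‖ := by
    intro v
    rw [norm_smul, norm_mul, Complex.norm_I, one_mul, Complex.norm_real, Real.norm_eq_abs]
  have hexp : ∀ (x : ℝ) (v : E),
      ‖Complex.exp (-(Complex.I) * (ω₀ : ℂ) * ((x : ℝ) : ℂ)) • v‖ = ‖v‖ := by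
    intro x v
    have h1 : ‖Complex.exp (-(Complex.I) * (ω₀ : ℂ) * ((x : ℝ) : ℂ))‖ = 1 := by
      rw [Complex.norm_exp]; simp
    rw [norm_smul, h1, one_mul]
  -- Step A : bound on φ assuming ψ is bounded by B
  have hφbd : ∀ s ∈ Icc (0:ℝ) Tε, (∀ τ ∈ Icc 0 s, ‖ψ ε τ‖ ≤ B) → ‖φ ε s‖ ≤ A + γ * Tε * B := by
    intro s hs hH
    rw [hDuhφ ε hεmem s (hsub hs)]
    refine le_trans (norm_sub_le _ _) ?_
    rw [hAnorm s, hIγ]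
    have h1 : ‖∫ τ in (0:ℝ)..s, U (s - τ) (ψ ε τ)‖ ≤ B * |s - 0| := by
      apply intervalIntegral.norm_integral_le_of_norm_le_const
      intro x hx
      rw [uIoc_of_le hs.1] at hx
      rw [hUnorm]
      exact hH x ⟨hx.1.le, hx.2⟩
    rw [sub_zero, abs_of_nonneg hs.1] at h1
    have h2 : γ * ‖∫ τ in (0:ℝ)..s, U (s - τ) (ψ ε τ)‖ ≤ γ * (B * s) :=
      mul_le_mul_of_nonneg_left h1 hγ.le
    have h3 := mul_le_mul_of_nonneg_left hs.2 (mul_nonneg hγ.le hB0.le)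
    linarith only [h2, h3]
  -- Step B : improved bound on ψ assuming ψ is bounded by B
  have hψbd : ∀ s ∈ Icc (0:ℝ) Tε, (∀ τ ∈ Icc 0 s, ‖ψ ε τ‖ ≤ B) → ‖ψ ε s‖ ≤ cc * s := by
    intro s hs hH
    rw [hDuhψ ε hεmem s (hsub hs)]
    rw [hIγ']
    have hJ : ‖∫ τ in (0:ℝ)..s,
        Complex.exp (-(Complex.I) * (ω₀:ℂ) * ((s - τ : ℝ) : ℂ)) • N (ψ ε τ)‖
        ≤ (Kp * B ^ p) * |s - 0| := by
      apply intervalIntegral.norm_integral_le_of_norm_le_const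
      intro x hx
      rw [uIoc_of_le hs.1] at hx
      rw [hexp]
      refine le_trans (hN _) ?_
      exact mul_le_mul_of_nonneg_left
        (Real.rpow_le_rpow (norm_nonneg _) (hH x ⟨hx.1.le, hx.2⟩) (by linarith)) hKp
    rw [sub_zero, abs_of_nonneg hs.1] at hJ
    have h1 : ‖∫ τ in (0:ℝ)..s,
        (Complex.exp (-(Complex.I) * (ω₀:ℂ) * ((s - τ : ℝ) : ℂ)) • φ ε τ
          - (Complex.I * (g:ℂ)) • ∫ τ in (0:ℝ)..s,
              Complex.exp (-(Complex.I) * (ω₀:ℂ) * ((s - τ : ℝ) : ℂ)) • N (ψ ε τ))‖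
        ≤ (A + γ * Tε * B + |g| * (Kp * B ^ p * Tε)) * |s - 0| := by
      apply intervalIntegral.norm_integral_le_of_norm_le_const
      intro x hx
      rw [uIoc_of_le hs.1] at hx
      refine le_trans (norm_sub_le _ _) ?_
      rw [hexp, hIg]
      have hφx := hφbd x ⟨hx.1.le, le_trans hx.2 hs.2⟩
        (fun τ hτ => hH τ ⟨hτ.1, le_trans hτ.2 hx.2⟩)
      have hJ2 : |g| * ‖∫ τ in (0:ℝ)..s,
          Complex.exp (-(Complex.I) * (ω₀:ℂ) * ((s - τ : ℝ) : ℂ)) • N (ψ ε τ)‖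
          ≤ |g| * (Kp * B ^ p * s) := by
        refine mul_le_mul_of_nonneg_left ?_ (abs_nonneg g)
        calc ‖∫ τ in (0:ℝ)..s,
            Complex.exp (-(Complex.I) * (ω₀:ℂ) * ((s - τ : ℝ) : ℂ)) • N (ψ ε τ)‖
            ≤ (Kp * B ^ p) * s := hJ
          _ = Kp * B ^ p * s := by ring
      have hsT : |g| * (Kp * B ^ p * s) ≤ |g| * (Kp * B ^ p * Tε) :=
        mul_le_mul_of_nonneg_left
          (mul_le_mul_of_nonneg_left hs.2 (mul_nonneg hKp hBp0)) (abs_nonneg g)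
      linarith only [hφx, hJ2, hsT]
    rw [sub_zero, abs_of_nonneg hs.1] at h1
    calc γ * ‖∫ τ in (0:ℝ)..s,
        (Complex.exp (-(Complex.I) * (ω₀:ℂ) * ((s - τ : ℝ) : ℂ)) • φ ε τ
          - (Complex.I * (g:ℂ)) • ∫ τ in (0:ℝ)..s,
              Complex.exp (-(Complex.I) * (ω₀:ℂ) * ((s - τ : ℝ) : ℂ)) • N (ψ ε τ))‖
        ≤ γ * ((A + γ * Tε * B + |g| * (Kp * B ^ p * Tε)) * s) :=
          mul_le_mul_of_nonneg_left h1 hγ.le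
      _ = cc * s := by rw [hccdef]; ring
  -- smallness facts in terms of Tε and B
  have hTε2 : Tε ^ 2 = C₁ ^ 2 * ε := by
    rw [hTεdef]; linear_combination C₁ ^ 2 * hrr
  have hγT : γ ^ 2 * Tε ^ 2 ≤ 1 / 8 := by rw [hTε2]; linarith only [h18a]
  have hrp : r ^ p = ε ^ (p / 2) := by
    rw [hrdef, ← Real.rpow_mul hε.le]
    congr 1; ring
  have hBle : B ≤ 2 * γ * C₁ * M * r := by
    rw [hBdef, hTεdef]
    have h := mul_le_mul_of_nonneg_left hAM
      (mul_nonneg (mul_nonneg (mul_nonneg (by norm_num : (0:ℝ) ≤ 2) hγ.le) hC₁) hr0.le)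
    linarith only [h]
  have hr2 : r ^ (2:ℝ) = r * r := by
    rw [show (2:ℝ) = ((2:ℕ):ℝ) by norm_num, Real.rpow_natCast]; ring
  have hgB' : γ * |g| * Kp * Tε ^ 2 * B ^ (p - 1) ≤ 1 / 8 := by
    have h1 : B ^ (p - 1) ≤ (2 * γ * C₁ * M) ^ (p - 1) * r ^ (p - 1) := by
      rw [← Real.mul_rpow (mul_nonneg (mul_nonneg (mul_nonneg (by norm_num) hγ.le) hC₁) hM.le) hr0.le]
      exact Real.rpow_le_rpow hB0.le hBle (by linarith)
    have h3 : r ^ (p - 1) * (r * r) = r ^ (p + 1) := by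
      rw [← hr2, ← Real.rpow_add hr0]
      congr 1; ring
    have hrp1 : r ^ (p + 1) = ε ^ ((p + 1) / 2) := by
      rw [hrdef, ← Real.rpow_mul hε.le]
      congr 1; ring
    have h4 : γ * |g| * Kp * Tε ^ 2 * B ^ (p - 1) ≤ K₂ * ε ^ ((p + 1) / 2) := by
      rw [hK₂def, ← hrp1]
      calc γ * |g| * Kp * Tε ^ 2 * B ^ (p - 1)
          ≤ γ * |g| * Kp * Tε ^ 2 * ((2 * γ * C₁ * M) ^ (p - 1) * r ^ (p - 1)) := by
            refine mul_le_mul_of_nonneg_left h1 ?_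
            exact mul_nonneg (mul_nonneg (mul_nonneg hγ.le (abs_nonneg g)) hKp) (sq_nonneg Tε)
        _ = γ * |g| * Kp * C₁ ^ 2 * (2 * γ * C₁ * M) ^ (p - 1) * (r ^ (p - 1) * (r * r)) := by
            rw [hTεdef]; ring
        _ = γ * |g| * Kp * C₁ ^ 2 * (2 * γ * C₁ * M) ^ (p - 1) * r ^ (p + 1) := by rw [h3]
    linarith only [h4, h18b]
  have hBp : B ^ p = B ^ (p - 1) * B := by
    have h := Real.rpow_add hB0 (p - 1) 1
    rw [Real.rpow_one] at h
    rw [show p - 1 + 1 = p by ring] at h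
    exact h
  have hccTε : cc * Tε ≤ 3 / 4 * B := by
    have hγTB : γ ^ 2 * Tε ^ 2 * B ≤ 1 / 8 * B := mul_le_mul_of_nonneg_right hγT hB0.le
    have hgBB : γ * |g| * Kp * Tε ^ 2 * B ^ (p - 1) * B ≤ 1 / 8 * B :=
      mul_le_mul_of_nonneg_right hgB' hB0.le
    have hhalf : γ * Tε * A = B / 2 := by rw [hBdef]; ring
    calc cc * Tε = γ * Tε * A + γ ^ 2 * Tε ^ 2 * B
          + γ * |g| * Kp * Tε ^ 2 * B ^ (p - 1) * B := by
          rw [hccdef, hBp]; ring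
      _ ≤ B / 2 + 1 / 8 * B + 1 / 8 * B := by linarith only [hγTB, hgBB, hhalf]
      _ = 3 / 4 * B := by ring
  -- the a priori bound on ψ, via a continuity (bootstrap) argument
  have hψ0 : ψ ε 0 = 0 := by
    have h := hDuhψ ε hεmem 0 ⟨le_refl 0, hT.le⟩
    simpa using h
  have hcont : ContinuousOn (fun s => ‖ψ ε s‖) (Icc 0 Tε) := ((hψc ε hεmem).mono hsub).norm
  have HψB : ∀ s ∈ Icc (0:ℝ) Tε, ‖ψ ε s‖ ≤ B := by
    apply bootstrap hTεpos.le hB0 hcont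
      (by show ‖ψ ε 0‖ < B; rw [hψ0, norm_zero]; exact hB0)
    intro s hs hH
    refine le_trans (hψbd s hs hH) ?_
    have h := mul_le_mul_of_nonneg_left hs.2 hcc0
    linarith only [h, hccTε]
  have Hψc : ∀ s ∈ Icc (0:ℝ) Tε, ‖ψ ε s‖ ≤ cc * s := fun s hs =>
    hψbd s hs (fun τ hτ => HψB τ ⟨hτ.1, le_trans hτ.2 hs.2⟩)
  -- the error bound
  have htT : t ∈ Icc (0:ℝ) T := hsub ht
  have he : ((ε ^ α : ℝ) : ℂ) • U t φ₀ - φ ε t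
      = (Complex.I * (γ:ℂ)) • ∫ τ in (0:ℝ)..t, U (t - τ) (ψ ε τ) := by
    rw [hDuhφ ε hεmem t htT]
    exact sub_sub_cancel _ _
  have hebd : ‖((ε ^ α : ℝ) : ℂ) • U t φ₀ - φ ε t‖ ≤ γ * (cc * t ^ 2 / 2) := by
    rw [he, hIγ]
    apply mul_le_mul_of_nonneg_left _ hγ.le
    calc ‖∫ τ in (0:ℝ)..t, U (t - τ) (ψ ε τ)‖
        ≤ ∫ τ in (0:ℝ)..t, ‖U (t - τ) (ψ ε τ)‖ :=
          intervalIntegral.norm_integral_le_integral_norm ht.1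
      _ ≤ ∫ τ in (0:ℝ)..t, cc * τ := by
          apply intervalIntegral.integral_mono_on ht.1 (hIntU ε hεmem t htT).norm
            ((continuous_const.mul continuous_id').intervalIntegrable 0 t)
          intro x hx
          rw [hUnorm]
          exact Hψc x ⟨hx.1, le_trans hx.2 ht.2⟩
      _ = cc * t ^ 2 / 2 := by rw [intervalIntegral.integral_const_mul, integral_id]; ring
  have hlow : A ≤ ‖φ ε t‖ + ‖((ε ^ α : ℝ) : ℂ) • U t φ₀ - φ ε t‖ := by
    have h2 : φ ε t + (((ε ^ α : ℝ) : ℂ) • U t φ₀ - φ ε t) = ((ε ^ α : ℝ) : ℂ) • U t φ₀ := by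
      abel
    calc A = ‖((ε ^ α : ℝ) : ℂ) • U t φ₀‖ := (hAnorm t).symm
      _ = ‖φ ε t + (((ε ^ α : ℝ) : ℂ) • U t φ₀ - φ ε t)‖ := by rw [h2]
      _ ≤ ‖φ ε t‖ + ‖((ε ^ α : ℝ) : ℂ) • U t φ₀ - φ ε t‖ := norm_add_le _ _
  -- scalar endgame
  have hεq0 : 0 ≤ ε ^ q := Real.rpow_nonneg hε.le _
  have hε2q : ε ^ 2 ≤ ε ^ q := by
    have h := Real.rpow_le_rpow_of_exponent_ge hε hε1.le hq2
    rwa [show ε ^ (2:ℝ) = ε ^ 2 from by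
      rw [show (2:ℝ) = ((2:ℕ):ℝ) by norm_num, Real.rpow_natCast]] at h
  have hεLq : ε ^ (1 + p / 2 + α * (p - 1)) ≤ ε ^ q :=
    Real.rpow_le_rpow_of_exponent_ge hε hε1.le hqL
  have ht2 : t ^ 2 ≤ C₁ ^ 2 * ε := by
    have h := mul_self_le_mul_self ht.1 ht.2
    linarith only [h, hTε2]
  have hTεB : Tε * B = 2 * γ * (C₁ ^ 2 * ε) * A := by
    calc Tε * B = 2 * γ * Tε ^ 2 * A := by rw [hBdef]; ring
      _ = 2 * γ * (C₁ ^ 2 * ε) * A := by rw [hTε2]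
  have hen1 : ‖((ε ^ α : ℝ) : ℂ) • U t φ₀ - φ ε t‖ ≤ 3 / 4 * (γ ^ 2 * C₁ ^ 2 * ε) * A := by
    have hstep : (cc * Tε) * (γ * Tε) ≤ (3 / 4 * B) * (γ * Tε) :=
      mul_le_mul_of_nonneg_right hccTε (mul_nonneg hγ.le hTεpos.le)
    calc ‖((ε ^ α : ℝ) : ℂ) • U t φ₀ - φ ε t‖ ≤ γ * (cc * t ^ 2 / 2) := hebd
      _ = (cc * t ^ 2) * (γ / 2) := by ring
      _ ≤ (cc * (C₁ ^ 2 * ε)) * (γ / 2) :=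
          mul_le_mul_of_nonneg_right (mul_le_mul_of_nonneg_left ht2 hcc0)
            (by linarith only [hγ.le] : (0:ℝ) ≤ γ / 2)
      _ = (cc * Tε) * (γ * Tε) / 2 := by rw [← hTε2]; ring
      _ ≤ (3 / 4 * B) * (γ * Tε) / 2 := by linarith only [hstep]
      _ = 3 / 8 * (γ * (Tε * B)) := by ring
      _ = 3 / 4 * (γ ^ 2 * C₁ ^ 2 * ε) * A := by rw [hTεB]; ring
  -- expansion of B ^ p
  have hMp : M ^ p = M ^ (p - 1) * M := by
    have h := Real.rpow_add hM (p - 1) 1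
    rw [Real.rpow_one] at h
    rw [show p - 1 + 1 = p by ring] at h
    exact h
  have hAp : A ^ p = ε ^ (α * (p - 1)) * M ^ (p - 1) * A := by
    have e1 : A ^ p = (ε ^ α) ^ p * M ^ p := by
      rw [hAdef, Real.mul_rpow (Real.rpow_nonneg hε.le α) hM.le]
    have e2 : (ε ^ α) ^ p = ε ^ (α * (p - 1)) * ε ^ α := by
      calc (ε ^ α) ^ p = ε ^ (α * p) := (Real.rpow_mul hε.le α p).symm
        _ = ε ^ (α * (p - 1)) * ε ^ α := by
            rw [show α * p = α * (p - 1) + α by ring, Real.rpow_add hε]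
    rw [e1, e2, hMp, hAdef]; ring
  have hBfac : B = (2 * γ * C₁) * r * A := by rw [hBdef, hTεdef]; ring
  have hBpexp : B ^ p = (2 * γ * C₁) ^ p * ε ^ (p / 2) * (ε ^ (α * (p - 1)) * M ^ (p - 1) * A) := by
    have h2γC : (0:ℝ) ≤ 2 * γ * C₁ := mul_nonneg (mul_nonneg (by norm_num) hγ.le) hC₁
    calc B ^ p = ((2 * γ * C₁) * r) ^ p * A ^ p := by
          rw [hBfac, Real.mul_rpow (mul_nonneg h2γC hr0.le) hA0.le]
      _ = (2 * γ * C₁) ^ p * r ^ p * A ^ p := by rw [Real.mul_rpow h2γC hr0.le]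
      _ = (2 * γ * C₁) ^ p * ε ^ (p / 2) * (ε ^ (α * (p - 1)) * M ^ (p - 1) * A) := by
          rw [hrp, hAp]
  have hεL : ε ^ (1 + p / 2 + α * (p - 1)) = ε * ε ^ (p / 2) * ε ^ (α * (p - 1)) := by
    rw [Real.rpow_add hε, Real.rpow_add hε, Real.rpow_one]
  -- decomposition of the error bound
  have hterm1 : γ ^ 2 * A * t ^ 2 / 2 ≤ γ ^ 2 * C₁ ^ 2 * ε / 2 * A := by
    have h0 : (0:ℝ) ≤ γ ^ 2 * A / 2 :=
      div_nonneg (mul_nonneg (sq_nonneg γ) hA0.le) (by norm_num)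
    calc γ ^ 2 * A * t ^ 2 / 2 = (γ ^ 2 * A / 2) * t ^ 2 := by ring
      _ ≤ (γ ^ 2 * A / 2) * (C₁ ^ 2 * ε) := mul_le_mul_of_nonneg_left ht2 h0
      _ = γ ^ 2 * C₁ ^ 2 * ε / 2 * A := by ring
  have hterm2 : γ ^ 2 * (γ * Tε * B) * t ^ 2 / 2 ≤ (γ ^ 2 * C₁ ^ 2 * ε) ^ 2 * A := by
    have h0 : (0:ℝ) ≤ γ ^ 2 * (γ * (Tε * B)) / 2 :=
      div_nonneg (mul_nonneg (sq_nonneg γ)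
        (mul_nonneg hγ.le (mul_nonneg hTεpos.le hB0.le))) (by norm_num)
    calc γ ^ 2 * (γ * Tε * B) * t ^ 2 / 2 = (γ ^ 2 * (γ * (Tε * B)) / 2) * t ^ 2 := by ring
      _ ≤ (γ ^ 2 * (γ * (Tε * B)) / 2) * (C₁ ^ 2 * ε) := mul_le_mul_of_nonneg_left ht2 h0
      _ = (γ ^ 2 * C₁ ^ 2 * ε) ^ 2 * A := by rw [hTεB]; ring
  have hterm3 : γ ^ 2 * (|g| * (Kp * B ^ p * Tε)) * t ^ 2 / 2
      ≤ c₂ * ε ^ (1 + p / 2 + α * (p - 1)) * A := by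
    have h0 : (0:ℝ) ≤ γ ^ 2 * (|g| * (Kp * B ^ p * Tε)) / 2 :=
      div_nonneg (mul_nonneg (sq_nonneg γ) hgKB0) (by norm_num)
    have hstep : γ ^ 2 * (|g| * (Kp * B ^ p * Tε)) * t ^ 2 / 2
        ≤ c₂ * ε ^ (1 + p / 2 + α * (p - 1)) * A * r := by
      calc γ ^ 2 * (|g| * (Kp * B ^ p * Tε)) * t ^ 2 / 2
          = (γ ^ 2 * (|g| * (Kp * B ^ p * Tε)) / 2) * t ^ 2 := by ring
        _ ≤ (γ ^ 2 * (|g| * (Kp * B ^ p * Tε)) / 2) * (C₁ ^ 2 * ε) :=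
            mul_le_mul_of_nonneg_left ht2 h0
        _ = c₂ * ε ^ (1 + p / 2 + α * (p - 1)) * A * r := by
            rw [hBpexp, hεL, hTεdef, hc₂def]; ring
    refine le_trans hstep ?_
    have hc₂εA : (0:ℝ) ≤ c₂ * ε ^ (1 + p / 2 + α * (p - 1)) * A :=
      mul_nonneg (mul_nonneg hc₂0 (Real.rpow_nonneg hε.le _)) hA0.le
    exact mul_le_of_le_one_right hc₂εA hr1.le
  have hen2 : ‖((ε ^ α : ℝ) : ℂ) • U t φ₀ - φ ε t‖
      ≤ γ ^ 2 * C₁ ^ 2 * ε / 2 * A + ((γ ^ 2 * C₁ ^ 2 * ε) ^ 2 * A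
        + c₂ * ε ^ (1 + p / 2 + α * (p - 1)) * A) := by
    have hdec : γ * (cc * t ^ 2 / 2) = γ ^ 2 * A * t ^ 2 / 2
        + (γ ^ 2 * (γ * Tε * B) * t ^ 2 / 2
          + γ ^ 2 * (|g| * (Kp * B ^ p * Tε)) * t ^ 2 / 2) := by
      rw [hccdef]; ring
    linarith only [hebd, hterm1, hterm2, hterm3, hdec]
  -- final combination
  set en := ‖((ε ^ α : ℝ) : ℂ) • U t φ₀ - φ ε t‖ with hendef
  set φn := ‖φ ε t‖ with hφndef
  clear_value en φn
  have hφn0 : 0 ≤ φn := by rw [hφndef]; exact norm_nonneg _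
  have hen0 : 0 ≤ en := by rw [hendef]; exact norm_nonneg _
  have hu0 : 0 ≤ γ ^ 2 * C₁ ^ 2 * ε :=
    mul_nonneg (mul_nonneg (sq_nonneg γ) (sq_nonneg C₁)) hε.le
  have henA : en ≤ 3 / 32 * A := by
    have h := mul_le_mul_of_nonneg_right h18a hA0.le
    linarith only [hen1, h]
  have hA2φ : A ≤ 2 * φn := by linarith only [hlow, henA, hφn0]
  have P1 : (γ ^ 2 * C₁ ^ 2 * ε / 2) * en
      ≤ (γ ^ 2 * C₁ ^ 2 * ε / 2) * (3 / 4 * (γ ^ 2 * C₁ ^ 2 * ε) * A) :=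
    mul_le_mul_of_nonneg_left hen1 (by linarith only [hu0] : (0:ℝ) ≤ γ ^ 2 * C₁ ^ 2 * ε / 2)
  have P1' : (γ ^ 2 * C₁ ^ 2 * ε / 2) * (3 / 4 * (γ ^ 2 * C₁ ^ 2 * ε) * A)
      ≤ 3 / 8 * ((γ ^ 2 * C₁ ^ 2 * ε) ^ 2 * A) := le_of_eq (by ring)
  have P2 : (γ ^ 2 * C₁ ^ 2 * ε / 2) * A
      ≤ (γ ^ 2 * C₁ ^ 2 * ε / 2) * (φn + en) :=
    mul_le_mul_of_nonneg_left hlow (by linarith only [hu0] : (0:ℝ) ≤ γ ^ 2 * C₁ ^ 2 * ε / 2)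
  have P3 : (γ ^ 2 * C₁ ^ 2 * ε) ^ 2 * A ≤ γ ^ 4 * C₁ ^ 4 * (ε ^ q * A) := by
    have h := mul_le_mul_of_nonneg_right hε2q (mul_nonneg (by positivity : (0:ℝ) ≤ γ ^ 4 * C₁ ^ 4) hA0.le)
    linarith only [h]
  have P4 : c₂ * ε ^ (1 + p / 2 + α * (p - 1)) * A ≤ c₂ * (ε ^ q * A) := by
    have h := mul_le_mul_of_nonneg_right hεLq (mul_nonneg hc₂0 hA0.le)
    linarith only [h]
  have hc₃0 : (0:ℝ) ≤ 11 / 8 * (γ ^ 4 * C₁ ^ 4) + c₂ :=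
    add_nonneg (by positivity) hc₂0
  have P5 : (11 / 8 * (γ ^ 4 * C₁ ^ 4) + c₂) * ε ^ q * A
      ≤ (11 / 8 * (γ ^ 4 * C₁ ^ 4) + c₂) * ε ^ q * (2 * φn) :=
    mul_le_mul_of_nonneg_left hA2φ (mul_nonneg hc₃0 hεq0)
  have N1 : (0:ℝ) ≤ γ ^ 4 * C₁ ^ 4 * (ε ^ q * φn) :=
    mul_nonneg (by positivity) (mul_nonneg hεq0 hφn0)
  rw [hDdef]
  linarith only [hen2, P1, P1', P2, P3, P4, P5, N1]
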